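/- arXiv:2311.12191 — 12 statements merged into one kernel-verified Lean document; each statement's English description precedes it below -/
import Mathlib

section
/- Every orthogonal Boolean poset is orthomodular; that is, if P is a bounded poset with an antitone involution ' that is distributive and complemented, and x ∨ y exists whenever x ≤ y', then for all x ≤ y the element x ∨ (x' ∧ y) exists and equals y. -/
open Set

variable {P : Type*} [PartialOrder P] [BoundedOrder P]

/-- Maximal elements of a subset of a poset. -/
def MaxE (A : Set P) : Set P := {m | m ∈ A ∧ ∀ x ∈ A, m ≤ x → x = m}

/-- Minimal elements of a subset of a poset. -/
def MinE (A : Set P) : Set P := {m | m ∈ A ∧ ∀ x ∈ A, x ≤ m → x = m}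

/-- `c` is an antitone involution. -/
def HasAntitoneInvol (c : P → P) : Prop :=
  (∀ x y : P, x ≤ y → c y ≤ c x) ∧ ∀ x : P, c (c x) = x

/-- Orthogonality: the join of two orthogonal elements exists. -/
def IsOrthogonalPoset (c : P → P) : Prop :=
  ∀ x y : P, x ≤ c y → ∃ z, IsLUB {x, y} z

/-- lub-complete (together with its dual, mub-complete): every lower bound of a
finite set lies below a maximal lower bound, and dually. -/
def IsLubComplete : Prop :=
  (∀ A : Set P, A.Finite → ∀ x ∈ lowerBounds A, ∃ m ∈ MaxE (lowerBounds A), x ≤ m) ∧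
  (∀ A : Set P, A.Finite → ∀ x ∈ upperBounds A, ∃ m ∈ MinE (upperBounds A), m ≤ x)

/-- Distributivity of a poset via the LU-identity L(U(x,y),z) = LU(L(x,z),L(y,z)). -/
def IsDistribPoset : Prop :=
  ∀ x y z : P, lowerBounds (upperBounds {x, y} ∪ {z}) =
    lowerBounds (upperBounds (lowerBounds ({x, z} : Set P) ∪ lowerBounds ({y, z} : Set P)))

/-- `c x` is a complement of `x`: L(x, x') = L(P) and U(x, x') = U(P). -/
def IsComplementedBy (c : P → P) : Prop :=
  ∀ x : P, lowerBounds ({x, c x} : Set P) = lowerBounds (univ : Set P) ∧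
    upperBounds ({x, c x} : Set P) = upperBounds (univ : Set P)

/-- Orthocomplemented: x ∨ x' = 1 for all x. -/
def IsOrthocomplemented (c : P → P) : Prop := ∀ x : P, IsLUB {x, c x} ⊤

/-- Paraorthomodular: x ≤ y and x' ∧ y = 0 imply x = y. -/
def IsParaOM (c : P → P) : Prop :=
  ∀ x y : P, x ≤ y → IsGLB {c x, y} ⊥ → x = y

/-- Orthomodular poset: orthogonal and x ≤ y implies x ∨ (y ∧ x') = y. -/
def IsOM (c : P → P) : Prop :=
  IsOrthogonalPoset c ∧ ∀ x y : P, x ≤ y → ∃ m, IsGLB {y, c x} m ∧ IsLUB {x, m} y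

/-- Weakly Boolean: x ∧ y = 0 and x ∧ y' = 0 imply x = 0. -/
def IsWeaklyBoolean (c : P → P) : Prop :=
  ∀ x y : P, IsGLB {x, y} ⊥ → IsGLB {x, c y} ⊥ → x = ⊥

/-- Classical implication x →_C y := Min U(x', y). -/
def impC (c : P → P) (x y : P) : Set P := MinE (upperBounds ({c x, y} : Set P))

/-- Sasaki implication x →_S y := x' ∨ Max L(x, y). -/
def impS (c : P → P) (x y : P) : Set P :=
  {z | ∃ w ∈ MaxE (lowerBounds ({x, y} : Set P)), IsLUB {c x, w} z}

/-- Dishkant implication x →_D y := y ∨ Max L(x', y'). -/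
def impD (c : P → P) (x y : P) : Set P :=
  {z | ∃ w ∈ MaxE (lowerBounds ({c x, c y} : Set P)), IsLUB {y, w} z}

/-- Kalmbach implication
x →_K y := Max L(x',y) ∨ Max L(x',y') ∨ (x ∧ Min U(x',y)). -/
def impK (c : P → P) (x y : P) : Set P :=
  {z | ∃ a ∈ MaxE (lowerBounds ({c x, y} : Set P)),
       ∃ b ∈ MaxE (lowerBounds ({c x, c y} : Set P)),
       ∃ u ∈ MinE (upperBounds ({c x, y} : Set P)),
       ∃ m, IsGLB {x, u} m ∧ IsLUB {a, b, m} z}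

/-- Non-tolens implication x →_N y := y' →_K x'. -/
def impN (c : P → P) (x y : P) : Set P := impK c (c y) (c x)

/-- Every orthogonal Boolean poset is orthomodular. -/
theorem stmt0 (c : P → P) (hinv : HasAntitoneInvol c) (horth : IsOrthogonalPoset c)
    (hdist : IsDistribPoset (P := P)) (hcompl : IsComplementedBy c) :
    ∀ x y : P, x ≤ y → ∃ m, IsGLB ({c x, y} : Set P) m ∧ IsLUB {x, m} y := by
  intro x y hxy
  obtain ⟨hant, hii⟩ := hinv
  obtain ⟨s, hs⟩ := horth x (c y) (by rw [hii]; exact hxy)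
  have hxs : x ≤ s := hs.1 (Set.mem_insert _ _)
  have hcys : c y ≤ s := hs.1 (Set.mem_insert_of_mem _ rfl)
  have hcsy : c s ≤ y := by
    have := hant _ _ hcys
    rwa [hii] at this
  have hglb : IsGLB ({c x, y} : Set P) (c s) := by
    constructor
    · rintro t (rfl | rfl)
      · exact hant _ _ hxs
      · exact hcsy
    · intro t ht
      have h1 : t ≤ c x := ht (Set.mem_insert _ _)
      have h2 : t ≤ y := ht (Set.mem_insert_of_mem _ rfl)
      have hxt : x ≤ c t := by
        have := hant _ _ h1
        rwa [hii] at this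
      have hcyt : c y ≤ c t := hant _ _ h2
      have hst : s ≤ c t := hs.2 (by
        rintro u (rfl | rfl)
        · exact hxt
        · exact hcyt)
      have := hant _ _ hst
      rwa [hii] at this
  refine ⟨c s, hglb, ?_, ?_⟩
  · rintro t (rfl | rfl)
    · exact hxy
    · exact hcsy
  · intro t ht
    have htx : x ≤ t := ht (Set.mem_insert _ _)
    have htm : c s ≤ t := ht (Set.mem_insert_of_mem _ rfl)
    have hd := hdist x (c x) y
    have hyL : y ∈ lowerBounds (upperBounds {x, c x} ∪ {y}) := by
      rintro u (hu | rfl)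
      · rw [(hcompl x).2] at hu
        exact hu (Set.mem_univ _)
      · exact le_refl _
    rw [hd] at hyL
    apply hyL
    rintro u (hu | hu)
    · exact le_trans (hu (Set.mem_insert _ _)) htx
    · exact le_trans (hglb.2 hu) htm
end

section
/- In a lub-complete bounded poset with an antitone involution, if x ≤ y then the classical implication is antitone in the first argument in the sense that y →_C z ≤₂ x →_C z, i.e., for every v ∈ x →_C z there exists u ∈ y →_C z with u ≤ v. -/
open Set

variable {P : Type*} [PartialOrder P] [BoundedOrder P]

/-- x ≤ y implies y →_C z ≤₂ x →_C z. -/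
theorem stmt2 (c : P → P) (hinv : HasAntitoneInvol c) (hlub : IsLubComplete (P := P)) :
    ∀ x y z : P, x ≤ y → ∀ v ∈ impC c x z, ∃ u ∈ impC c y z, u ≤ v := by
  intro x y z hxy v hv
  obtain ⟨hvU, -⟩ := hv
  have hv' : v ∈ upperBounds ({c y, z} : Set P) := by
    intro a ha
    rcases ha with rfl | ha
    · exact (hinv.1 x y hxy).trans (hvU (by simp [Set.mem_insert_iff]))
    · exact hvU (by simp [ha])
  obtain ⟨u, hu, huv⟩ := hlub.2 {c y, z} (Set.toFinite _) v hv'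
  exact ⟨u, hu, huv⟩
end

section
/- An orthogonal lub-complete poset P is orthocomplemented (x ∨ x' = 1 for all x) if and only if for all x, y ∈ P, x ≤ y implies x →_C y = {1}. -/
open Set

variable {P : Type*} [PartialOrder P] [BoundedOrder P]

/-- orthocomplemented iff x ≤ y implies x →_C y = {1}. -/
theorem stmt4 (c : P → P) (hinv : HasAntitoneInvol c) (horth : IsOrthogonalPoset c)
    (hlub : IsLubComplete (P := P)) :
    IsOrthocomplemented c ↔ ∀ x y : P, x ≤ y → impC c x y = {(⊤ : P)} := by
  constructor
  · intro hoc x y hxy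
    have hub : upperBounds ({c x, y} : Set P) = {⊤} := by
      ext u
      constructor
      · intro hu
        have hcx : c x ≤ u := hu (by simp)
        have hy : y ≤ u := hu (by simp)
        have : u ∈ upperBounds ({x, c x} : Set P) := by
          intro z hz
          rcases hz with rfl | hz
          · exact le_trans hxy hy
          · simpa [Set.mem_singleton_iff.mp hz]
        exact le_antisymm le_top ((hoc x).2 this)
      · rintro rfl
        intro z _; exact le_top
    simp only [impC, MinE, hub]
    ext u
    simp only [Set.mem_setOf_eq, Set.mem_singleton_iff]
    constructor
    · rintro ⟨rfl, _⟩; rfl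
    · rintro rfl; exact ⟨rfl, fun z hz _ => hz⟩
  · intro h x
    have hmin : impC c x x = {(⊤ : P)} := h x x le_rfl
    constructor
    · intro z hz
      rcases hz with rfl | hz
      · exact le_top
      · simp [Set.mem_singleton_iff.mp hz]
    · intro u hu
      have hu' : u ∈ upperBounds ({c x, x} : Set P) := by
        intro z hz
        rcases hz with rfl | hz
        · exact hu (by simp)
        · exact hu (by simp [Set.mem_singleton_iff.mp hz])
      obtain ⟨m, hm, hmu⟩ := hlub.2 {c x, x} (Set.toFinite _) u hu'
      have : m ∈ impC c x x := hm
      rw [hmin] at this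
      rw [Set.mem_singleton_iff.mp this] at hmu
      exact hmu
end

section
/- If P is an orthogonal lub-complete Boolean poset, then for all x, y ∈ P, x →_C y = {1} implies x ≤ y. -/
open Set

variable {P : Type*} [PartialOrder P] [BoundedOrder P]

/-- in an orthogonal lub-complete Boolean poset, x →_C y = {1} implies x ≤ y. -/
theorem stmt5 (c : P → P) (hinv : HasAntitoneInvol c) (horth : IsOrthogonalPoset c)
    (hlub : IsLubComplete (P := P)) (hdist : IsDistribPoset (P := P))
    (hcompl : IsComplementedBy c) :
    ∀ x y : P, impC c x y = {(⊤ : P)} → x ≤ y := by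
  intro x y h
  -- Step 1: upperBounds {c x, y} = {⊤}
  have hU : upperBounds ({c x, y} : Set P) = {(⊤ : P)} := by
    ext u
    constructor
    · intro hu
      obtain ⟨m, hm, hmu⟩ := hlub.2 {c x, y} ((Set.finite_singleton _).insert _) u hu
      have : m ∈ impC c x y := hm
      rw [h] at this
      have hmt : m = ⊤ := this
      have : (⊤ : P) ≤ u := hmt ▸ hmu
      exact le_antisymm le_top this
    · intro hu
      rw [hu]
      intro a _
      exact le_top
  -- Step 2: x ∈ lowerBounds (upperBounds {c x, y} ∪ {x})
  have hxL : x ∈ lowerBounds (upperBounds ({c x, y} : Set P) ∪ {x}) := by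
    intro a ha
    rcases ha with ha | ha
    · rw [hU] at ha; exact ha ▸ le_top
    · exact le_of_eq ha.symm
  -- Step 3: use distributivity
  rw [hdist (c x) y x] at hxL
  -- Step 4: y is an upper bound of lowerBounds {c x, x} ∪ lowerBounds {y, x}
  apply hxL
  intro a ha
  rcases ha with ha | ha
  · have : a ∈ lowerBounds (univ : Set P) := by
      have := (hcompl x).1
      rw [Set.pair_comm (c x) x] at ha
      rw [this] at ha
      exact ha
    exact this (Set.mem_univ y)
  · exact ha (Set.mem_insert y {x})
end

section
/- If P is an orthogonal lub-complete poset in which x →_C y = {1} implies x ≤ y for all x, y, then P is a weakly Boolean paraorthomodular poset. -/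
open Set

variable {P : Type*} [PartialOrder P] [BoundedOrder P]

/-- if x →_C y = {1} implies x ≤ y, then P is weakly Boolean paraorthomodular. -/
theorem stmt6 (c : P → P) (hinv : HasAntitoneInvol c) (horth : IsOrthogonalPoset c)
    (hlub : IsLubComplete (P := P))
    (himp : ∀ x y : P, impC c x y = {(⊤ : P)} → x ≤ y) :
    IsWeaklyBoolean c ∧ IsParaOM c := by
  obtain ⟨hant, hcc⟩ := hinv
  have hctop : c ⊥ = ⊤ := by
    have h1 : ⊤ ≤ c ⊥ := by
      calc ⊤ = c (c ⊤) := (hcc ⊤).symm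
        _ ≤ c ⊥ := hant ⊥ (c ⊤) bot_le
    exact le_antisymm le_top h1
  have key : ∀ u v : P, (∀ m, m ∈ upperBounds ({c u, v} : Set P) → c m ≤ ⊥) → u ≤ v := by
    intro u v h
    apply himp u v
    have hall : ∀ m ∈ MinE (upperBounds ({c u, v} : Set P)), m = ⊤ := by
      intro m hm
      have h2 : c m = ⊥ := le_antisymm (h m hm.1) bot_le
      calc m = c (c m) := (hcc m).symm
        _ = c ⊥ := by rw [h2]
        _ = ⊤ := hctop
    obtain ⟨m, hm, -⟩ := hlub.2 {c u, v} (Set.toFinite _) ⊤ (fun z _ => le_top)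
    have hmtop := hall m hm
    subst hmtop
    ext z
    simp only [Set.mem_singleton_iff]
    exact ⟨hall z, fun hz => hz ▸ hm⟩
  constructor
  · intro x y h1 h2
    have hxc : x ≤ c y := by
      apply key
      intro m hm
      have hcu : c x ≤ m := hm (Set.mem_insert _ _)
      have hv : c y ≤ m := hm (Set.mem_insert_of_mem _ rfl)
      have h3 : c m ≤ x := (hcc x) ▸ hant (c x) m hcu
      have h4 : c m ≤ y := (hcc y) ▸ hant (c y) m hv
      apply h1.2
      intro z hz
      rcases hz with rfl | hz
      · exact h3
      · exact Set.mem_singleton_iff.mp hz ▸ h4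
    have hxbot : x ≤ ⊥ := by
      apply h2.2
      intro z hz
      rcases hz with rfl | hz
      · exact le_refl _
      · exact Set.mem_singleton_iff.mp hz ▸ hxc
    exact le_antisymm hxbot bot_le
  · intro x y hxy hglb
    refine le_antisymm hxy ?_
    apply key
    intro m hm
    have hcu : c y ≤ m := hm (Set.mem_insert _ _)
    have hv : x ≤ m := hm (Set.mem_insert_of_mem _ rfl)
    have h3 : c m ≤ y := (hcc y) ▸ hant (c y) m hcu
    have h4 : c m ≤ c x := hant x m hv
    apply hglb.2
    intro z hz
    rcases hz with rfl | hz
    · exact h4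
    · exact Set.mem_singleton_iff.mp hz ▸ h3
end

section
/- For an orthogonal lub-complete poset P, the following are equivalent: (i) P is a Boolean poset; (ii) for all x, y ∈ P, x ≤ y if and only if x →_C y = {1}; (iii) P is a Boolean algebra (i.e., a lattice that is a Boolean poset). -/
open Set

set_option linter.unusedSectionVars false

variable {P : Type*} [PartialOrder P] [BoundedOrder P]

section Aux

variable {c : P → P}

private lemma mem_lb_pair {a b t : P} :
    t ∈ lowerBounds ({a, b} : Set P) ↔ t ≤ a ∧ t ≤ b := by
  simp [lowerBounds]

private lemma mem_ub_pair {a b t : P} :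
    t ∈ upperBounds ({a, b} : Set P) ↔ a ≤ t ∧ b ≤ t := by
  simp [upperBounds]

private lemma lb_univ : lowerBounds (univ : Set P) = {⊥} := by
  ext t
  constructor
  · intro h; exact le_antisymm (h (mem_univ ⊥)) bot_le
  · rintro rfl _ _; exact bot_le

private lemma ub_univ : upperBounds (univ : Set P) = {⊤} := by
  ext t
  constructor
  · intro h; exact le_antisymm le_top (h (mem_univ ⊤))
  · rintro rfl _ _; exact le_top

private lemma pair_finite (a b : P) : ({a, b} : Set P).Finite :=
  (Set.finite_singleton b).insert a

/-- Boolean-orthoposet property: disjoint elements are orthogonal. -/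
private def StarP (c : P → P) : Prop :=
  ∀ p q : P, lowerBounds ({p, q} : Set P) = {⊥} → p ≤ c q

/-- Complementation in the concrete form L(x,x') = {⊥}, U(x,x') = {⊤}. -/
private def ComplP (c : P → P) : Prop :=
  ∀ x : P, lowerBounds ({x, c x} : Set P) = {⊥} ∧
    upperBounds ({x, c x} : Set P) = {⊤}

private lemma le_c_swap (hinv : HasAntitoneInvol c) {x y : P} (h : x ≤ c y) : y ≤ c x := by
  have := hinv.1 _ _ h
  rwa [hinv.2] at this

private lemma c_top (hinv : HasAntitoneInvol c) : c ⊤ = ⊥ := by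
  have : c ⊤ ≤ c (c ⊥) := hinv.1 _ _ le_top
  rw [hinv.2] at this
  exact le_antisymm this bot_le

private lemma c_bot (hinv : HasAntitoneInvol c) : c ⊥ = ⊤ := by
  have : c (c ⊤) ≤ c ⊥ := hinv.1 _ _ bot_le
  rw [hinv.2] at this
  exact le_antisymm le_top this

private lemma compl_of_A (h : IsComplementedBy c) : ComplP c := by
  intro x
  refine ⟨?_, ?_⟩
  · rw [(h x).1, lb_univ]
  · rw [(h x).2, ub_univ]

/-- (i) ⇒ (†): distributivity plus complementation gives the Star property. -/
private lemma star_of_A (hd : IsDistribPoset (P := P)) (hcomp : ComplP c) :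
    StarP c := by
  intro p q hpq
  have h := hd q (c q) p
  have hpmem : p ∈ lowerBounds (upperBounds ({q, c q} : Set P) ∪ {p}) := by
    intro w hw
    rcases hw with hw | hw
    · rw [(hcomp q).2] at hw
      rw [hw]; exact le_top
    · rw [hw]
  rw [h] at hpmem
  apply hpmem
  intro w hw
  rcases hw with hw | hw
  · have : w ∈ lowerBounds ({p, q} : Set P) := by
      rw [mem_lb_pair] at hw ⊢
      exact ⟨hw.2, hw.1⟩
    rw [hpq] at this
    rw [this]; exact bot_le
  · exact (mem_lb_pair.mp hw).1

/-- (ii) ⇒ complementation. -/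
private lemma compl_of_B (hinv : HasAntitoneInvol c) (hlub : IsLubComplete (P := P))
    (hB : ∀ x y : P, x ≤ y ↔ impC c x y = {(⊤ : P)}) : ComplP c := by
  intro x
  have hU : upperBounds ({c x, x} : Set P) = {⊤} := by
    have h1 : impC c x x = {(⊤ : P)} := (hB x x).mp le_rfl
    ext t
    constructor
    · intro ht
      obtain ⟨m, hm, hmt⟩ := hlub.2 {c x, x} (pair_finite _ _) t ht
      rw [show MinE (upperBounds ({c x, x} : Set P)) = impC c x x from rfl, h1] at hm
      have : (⊤ : P) ≤ t := hm ▸ hmt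
      exact le_antisymm le_top this
    · rintro rfl
      rw [mem_ub_pair]; exact ⟨le_top, le_top⟩
  constructor
  · ext t
    constructor
    · intro ht
      rw [mem_lb_pair] at ht
      have h1 : c x ≤ c t := hinv.1 _ _ ht.1
      have h2 : x ≤ c t := le_c_swap hinv ht.2
      have : c t ∈ upperBounds ({c x, x} : Set P) := mem_ub_pair.mpr ⟨h1, h2⟩
      rw [hU] at this
      have ht' : c t = ⊤ := this
      have : t = ⊥ := by
        have := congrArg c ht'
        rwa [hinv.2, c_top hinv] at this
      exact this
    · rintro rfl
      rw [mem_lb_pair]; exact ⟨bot_le, bot_le⟩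
  · ext t
    constructor
    · intro ht
      rw [mem_ub_pair] at ht
      have : t ∈ upperBounds ({c x, x} : Set P) := mem_ub_pair.mpr ⟨ht.2, ht.1⟩
      rw [hU] at this; exact this
    · rintro rfl
      rw [mem_ub_pair]; exact ⟨le_top, le_top⟩

/-- (ii) ⇒ (†). -/
private lemma star_of_B (hinv : HasAntitoneInvol c)
    (hB : ∀ x y : P, x ≤ y ↔ impC c x y = {(⊤ : P)}) : StarP c := by
  intro p q hpq
  have hU : upperBounds ({c p, c q} : Set P) = {⊤} := by
    ext t
    constructor
    · intro ht
      rw [mem_ub_pair] at ht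
      have h1 : c t ≤ p := by
        have := hinv.1 _ _ ht.1
        rwa [hinv.2] at this
      have h2 : c t ≤ q := by
        have := hinv.1 _ _ ht.2
        rwa [hinv.2] at this
      have : c t ∈ lowerBounds ({p, q} : Set P) := mem_lb_pair.mpr ⟨h1, h2⟩
      rw [hpq] at this
      have hct : c t = ⊥ := this
      have := congrArg c hct
      rwa [hinv.2, c_bot hinv] at this
    · rintro rfl
      rw [mem_ub_pair]; exact ⟨le_top, le_top⟩
  have : impC c p (c q) = {(⊤ : P)} := by
    show MinE (upperBounds ({c p, c q} : Set P)) = {(⊤ : P)}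
    rw [hU]
    ext m
    constructor
    · intro hm; exact hm.1
    · rintro rfl
      exact ⟨rfl, fun x hx _ => hx⟩
  exact (hB p (c q)).mpr this

/-- Tkadlec-style: (†) + complementation + orthogonality + maximality ⇒
all binary glbs exist. -/
private lemma glb_of (hinv : HasAntitoneInvol c) (horth : IsOrthogonalPoset c) (hlub : IsLubComplete (P := P))
    (hstar : StarP c) (hcomp : ComplP c) (a b : P) :
    ∃ m, IsGLB ({a, b} : Set P) m := by
  obtain ⟨c0, hc0max, -⟩ := hlub.1 {a, b} (pair_finite a b) ⊥
    (mem_lb_pair.mpr ⟨bot_le, bot_le⟩)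
  refine ⟨c0, hc0max.1, ?_⟩
  intro d hd
  have key : lowerBounds ({d, c c0} : Set P) = {⊥} := by
    ext t
    constructor
    · intro ht
      obtain ⟨e, ⟨hemem, hemax⟩, hte⟩ :=
        hlub.1 {d, c c0} (pair_finite _ _) t ht
      rw [mem_lb_pair] at hemem
      obtain ⟨s, hs⟩ := horth e c0 hemem.2
      have hda : d ≤ a := (mem_lb_pair.mp hd).1
      have hdb : d ≤ b := (mem_lb_pair.mp hd).2
      have hc0ab := mem_lb_pair.mp hc0max.1
      have hsa : s ≤ a := hs.2 (mem_ub_pair.mpr ⟨hemem.1.trans hda, hc0ab.1⟩)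
      have hsb : s ≤ b := hs.2 (mem_ub_pair.mpr ⟨hemem.1.trans hdb, hc0ab.2⟩)
      have hc0s : c0 ≤ s := hs.1 (by right; rfl)
      have hes : e ≤ s := hs.1 (by left; rfl)
      have hsc0 : s = c0 := hc0max.2 s (mem_lb_pair.mpr ⟨hsa, hsb⟩) hc0s
      have hec0 : e ≤ c0 := hsc0 ▸ hes
      have : e ∈ lowerBounds ({c0, c c0} : Set P) :=
        mem_lb_pair.mpr ⟨hec0, hemem.2⟩
      rw [(hcomp c0).1] at this
      have he : e = ⊥ := this
      have : t ≤ ⊥ := he ▸ hte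
      exact le_antisymm this bot_le
    · rintro rfl
      rw [mem_lb_pair]; exact ⟨bot_le, bot_le⟩
  have := hstar d (c c0) key
  rwa [hinv.2] at this

/-- Binary lubs from binary glbs via the antitone involution. -/
private lemma lub_of (hinv : HasAntitoneInvol c) (hglb : ∀ a b : P, ∃ m, IsGLB ({a, b} : Set P) m)
    (a b : P) : ∃ s, IsLUB ({a, b} : Set P) s := by
  obtain ⟨m, hm⟩ := hglb (c a) (c b)
  have hmab := mem_lb_pair.mp hm.1
  refine ⟨c m, ?_, ?_⟩
  · rw [mem_ub_pair]
    exact ⟨le_c_swap hinv hmab.1, le_c_swap hinv hmab.2⟩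
  · intro u hu
    rw [mem_ub_pair] at hu
    have h1 : c u ≤ c a := hinv.1 _ _ hu.1
    have h2 : c u ≤ c b := hinv.1 _ _ hu.2
    have : c u ≤ m := hm.2 (mem_lb_pair.mpr ⟨h1, h2⟩)
    have := hinv.1 _ _ this
    rwa [hinv.2] at this

/-- The distributive inequality from (†) and complementation, in a lattice. -/
private lemma distrib_ineq (hinv : HasAntitoneInvol c) (hstar : StarP c) (hcomp : ComplP c)
    {x y z p xz yz u v : P}
    (hp : IsLUB ({x, y} : Set P) p) (hu : IsGLB ({p, z} : Set P) u)
    (hxz : IsGLB ({x, z} : Set P) xz) (hyz : IsGLB ({y, z} : Set P) yz)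
    (hv : IsLUB ({xz, yz} : Set P) v) : u ≤ v := by
  have huz : u ≤ z := (mem_lb_pair.mp hu.1).2
  have hup : u ≤ p := (mem_lb_pair.mp hu.1).1
  have key : lowerBounds ({u, c v} : Set P) = {⊥} := by
    ext w
    constructor
    · intro hw
      rw [mem_lb_pair] at hw
      have hwcx : w ≤ c x := by
        apply hstar
        ext t
        constructor
        · intro ht
          rw [mem_lb_pair] at ht
          have htv : t ≤ v := le_trans
            (hxz.2 (mem_lb_pair.mpr ⟨ht.2, (ht.1.trans hw.1).trans huz⟩))
            ((mem_ub_pair.mp hv.1).1)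
          have htcv : t ≤ c v := ht.1.trans hw.2
          have : t ∈ lowerBounds ({v, c v} : Set P) := mem_lb_pair.mpr ⟨htv, htcv⟩
          rw [(hcomp v).1] at this
          exact this
        · rintro rfl
          rw [mem_lb_pair]; exact ⟨bot_le, bot_le⟩
      have hwcy : w ≤ c y := by
        apply hstar
        ext t
        constructor
        · intro ht
          rw [mem_lb_pair] at ht
          have htv : t ≤ v := le_trans
            (hyz.2 (mem_lb_pair.mpr ⟨ht.2, (ht.1.trans hw.1).trans huz⟩))
            ((mem_ub_pair.mp hv.1).2)
          have htcv : t ≤ c v := ht.1.trans hw.2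
          have : t ∈ lowerBounds ({v, c v} : Set P) := mem_lb_pair.mpr ⟨htv, htcv⟩
          rw [(hcomp v).1] at this
          exact this
        · rintro rfl
          rw [mem_lb_pair]; exact ⟨bot_le, bot_le⟩
      have hpcw : p ≤ c w :=
        hp.2 (mem_ub_pair.mpr ⟨le_c_swap hinv hwcx, le_c_swap hinv hwcy⟩)
      have hwcp : w ≤ c p := le_c_swap hinv hpcw
      have : w ∈ lowerBounds ({p, c p} : Set P) :=
        mem_lb_pair.mpr ⟨hw.1.trans hup, hwcp⟩
      rw [(hcomp p).1] at this
      exact this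
    · rintro rfl
      rw [mem_lb_pair]; exact ⟨bot_le, bot_le⟩
  have := hstar u (c v) key
  rwa [hinv.2] at this

/-- (†) + complementation + lattice ⇒ the LU distributivity identity. -/
private lemma distrib_of (hinv : HasAntitoneInvol c) (hstar : StarP c) (hcomp : ComplP c)
    (hglb : ∀ a b : P, ∃ m, IsGLB ({a, b} : Set P) m)
    (hlubs : ∀ a b : P, ∃ s, IsLUB ({a, b} : Set P) s) :
    IsDistribPoset (P := P) := by
  intro x y z
  obtain ⟨p, hp⟩ := hlubs x y
  obtain ⟨xz, hxz⟩ := hglb x z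
  obtain ⟨yz, hyz⟩ := hglb y z
  obtain ⟨v, hv⟩ := hlubs xz yz
  obtain ⟨u, hu⟩ := hglb p z
  have huv : u = v := by
    apply le_antisymm
    · exact distrib_ineq hinv hstar hcomp hp hu hxz hyz hv
    · apply hv.2
      rw [mem_ub_pair]
      constructor
      · exact hu.2 (mem_lb_pair.mpr
          ⟨(mem_lb_pair.mp hxz.1).1.trans (hp.1 (by left; rfl)),
           (mem_lb_pair.mp hxz.1).2⟩)
      · exact hu.2 (mem_lb_pair.mpr
          ⟨(mem_lb_pair.mp hyz.1).1.trans (hp.1 (by right; rfl)),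
           (mem_lb_pair.mp hyz.1).2⟩)
  ext t
  constructor
  · intro ht
    have htp : t ≤ p := ht (Or.inl hp.1)
    have htz : t ≤ z := ht (Or.inr rfl)
    have htu : t ≤ u := hu.2 (mem_lb_pair.mpr ⟨htp, htz⟩)
    intro w hw
    have hvw : v ≤ w := hv.2 (mem_ub_pair.mpr
      ⟨hw (Or.inl hxz.1), hw (Or.inr hyz.1)⟩)
    exact (huv ▸ htu).trans hvw
  · intro ht
    have hvmem : v ∈ upperBounds (lowerBounds ({x, z} : Set P) ∪
        lowerBounds ({y, z} : Set P)) := by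
      rintro w (hw | hw)
      · exact (hxz.2 hw).trans ((mem_ub_pair.mp hv.1).1)
      · exact (hyz.2 hw).trans ((mem_ub_pair.mp hv.1).2)
    have htv : t ≤ v := ht hvmem
    intro w hw
    rcases hw with hw | hw
    · exact ((htv.trans (huv ▸ le_rfl : v ≤ u)).trans
        (mem_lb_pair.mp hu.1).1).trans (hp.2 hw)
    · rw [hw]
      exact (htv.trans (huv ▸ le_rfl : v ≤ u)).trans (mem_lb_pair.mp hu.1).2

/-- From complementation + lubs: x ≤ y ↔ x →_C y = {⊤}. -/
private lemma order_of (hinv : HasAntitoneInvol c) (hstar : StarP c) (hcomp : ComplP c)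
    (hlubs : ∀ a b : P, ∃ s, IsLUB ({a, b} : Set P) s) (x y : P) :
    x ≤ y ↔ impC c x y = {(⊤ : P)} := by
  obtain ⟨s, hs⟩ := hlubs (c x) y
  have himp : impC c x y = {s} := by
    show MinE (upperBounds ({c x, y} : Set P)) = {s}
    have hub : upperBounds ({c x, y} : Set P) = Ici s := by
      ext q
      constructor
      · intro hq; exact hs.2 hq
      · intro hq
        rw [mem_ub_pair]
        exact ⟨(hs.1 (by left; rfl)).trans hq, (hs.1 (by right; rfl)).trans hq⟩
    rw [hub]
    ext m
    constructor
    · rintro ⟨hm, hmin⟩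
      exact (hmin s le_rfl hm).symm
    · rintro rfl
      exact ⟨le_rfl, fun q hq hqm => le_antisymm hqm hq⟩
  rw [himp, Set.singleton_eq_singleton_iff]
  constructor
  · intro hxy
    have : s ∈ upperBounds ({x, c x} : Set P) := mem_ub_pair.mpr
      ⟨hxy.trans (hs.1 (by right; rfl)), hs.1 (by left; rfl)⟩
    rw [(hcomp x).2] at this
    exact this
  · intro hst
    have key : lowerBounds ({x, c y} : Set P) = {⊥} := by
      ext t
      constructor
      · intro ht
        rw [mem_lb_pair] at ht
        have h1 : c x ≤ c t := hinv.1 _ _ ht.1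
        have h2 : y ≤ c t := le_c_swap hinv ht.2
        have : s ≤ c t := hs.2 (mem_ub_pair.mpr ⟨h1, h2⟩)
        rw [hst] at this
        have hct : c t = ⊤ := le_antisymm le_top this
        have := congrArg c hct
        rwa [hinv.2, c_top hinv] at this
      · rintro rfl
        rw [mem_lb_pair]; exact ⟨bot_le, bot_le⟩
    have := hstar x (c y) key
    rwa [hinv.2] at this

end Aux

/-- Boolean poset ↔ order property for →_C ↔ Boolean algebra. -/
theorem stmt7 (c : P → P) (hinv : HasAntitoneInvol c) (horth : IsOrthogonalPoset c)
    (hlub : IsLubComplete (P := P)) :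
    ((IsDistribPoset (P := P) ∧ IsComplementedBy c) ↔
      (∀ x y : P, x ≤ y ↔ impC c x y = {(⊤ : P)})) ∧
    ((IsDistribPoset (P := P) ∧ IsComplementedBy c) ↔
      ((∀ x y : P, (∃ z, IsLUB ({x, y} : Set P) z) ∧ ∃ z, IsGLB ({x, y} : Set P) z) ∧
        IsDistribPoset (P := P) ∧ IsComplementedBy c)) := by
  constructor
  · constructor
    · intro hA x y
      have hcomp := compl_of_A hA.2
      have hstar := star_of_A hA.1 hcomp
      have hglb := glb_of hinv horth hlub hstar hcomp
      have hlubs := lub_of hinv hglb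
      exact order_of hinv hstar hcomp hlubs x y
    · intro hB
      have hcomp := compl_of_B hinv hlub hB
      have hstar := star_of_B hinv hB
      have hglb := glb_of hinv horth hlub hstar hcomp
      have hlubs := lub_of hinv hglb
      refine ⟨distrib_of hinv hstar hcomp hglb hlubs, ?_⟩
      intro x
      rw [lb_univ, ub_univ]
      exact hcomp x
  · constructor
    · intro hA
      have hcomp := compl_of_A hA.2
      have hstar := star_of_A hA.1 hcomp
      have hglb := glb_of hinv horth hlub hstar hcomp
      have hlubs := lub_of hinv hglb
      exact ⟨fun x y => ⟨hlubs x y, hglb x y⟩, hA⟩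
    · exact And.right
end

section
/- Let P be an orthogonal, orthocomplemented, lub-complete poset. If there exists a binary operator ⊙ : P² → 2^P such that x ⊙ y ≤₁ {z} iff {x} ≤₂ (y →_C z) for all x, y, z ∈ P (adjointness), then P is a Boolean algebra. Conversely, in a Boolean algebra, ⊙ = ∧ realizes this adjunction with x →_C y = {x' ∨ y}. -/
open Set

variable {P : Type*} [PartialOrder P] [BoundedOrder P]

/- ### Auxiliary lemmas for the proof of Statement 8 -/

lemma stmt8_pair_ub {a b s : P} (h1 : a ≤ s) (h2 : b ≤ s) :
    s ∈ upperBounds ({a, b} : Set P) := by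
  rintro t (rfl | rfl) <;> assumption

lemma stmt8_pair_lb {a b s : P} (h1 : s ≤ a) (h2 : s ≤ b) :
    s ∈ lowerBounds ({a, b} : Set P) := by
  rintro t (rfl | rfl) <;> assumption

lemma stmt8_ub_left {a b s : P} (h : s ∈ upperBounds ({a, b} : Set P)) : a ≤ s :=
  h (mem_insert _ _)

lemma stmt8_ub_right {a b s : P} (h : s ∈ upperBounds ({a, b} : Set P)) : b ≤ s :=
  h (mem_insert_of_mem _ rfl)

lemma stmt8_lb_left {a b s : P} (h : s ∈ lowerBounds ({a, b} : Set P)) : s ≤ a :=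
  h (mem_insert _ _)

lemma stmt8_lb_right {a b s : P} (h : s ∈ lowerBounds ({a, b} : Set P)) : s ≤ b :=
  h (mem_insert_of_mem _ rfl)

lemma stmt8_minE_of_isLUB {S : Set P} {j : P} (h : IsLUB S j) :
    MinE (upperBounds S) = {j} := by
  ext t
  simp only [MinE, mem_setOf_eq, mem_singleton_iff]
  constructor
  · rintro ⟨ht, hmin⟩
    exact (hmin j h.1 (h.2 ht)).symm
  · rintro rfl
    exact ⟨h.1, fun s hs hsj => le_antisymm hsj (h.2 hs)⟩

/-- an adjoint operator for →_C exists iff P is a Boolean algebra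
(in a Boolean algebra ⊙ = ∧ realizes the adjunction, with x →_C y = {x' ∨ y}). -/
theorem stmt8 (c : P → P) (hinv : HasAntitoneInvol c) (horth : IsOrthogonalPoset c)
    (hoc : IsOrthocomplemented c) (hlub : IsLubComplete (P := P)) :
    ((∃ odot : P → P → Set P, ∀ x y z : P,
        (∀ u ∈ odot x y, u ≤ z) ↔ (∀ v ∈ impC c y z, x ≤ v)) →
      ((∀ x y : P, (∃ w, IsLUB ({x, y} : Set P) w) ∧ ∃ w, IsGLB ({x, y} : Set P) w) ∧
        IsDistribPoset (P := P) ∧ IsComplementedBy c)) ∧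
    (((∀ x y : P, (∃ w, IsLUB ({x, y} : Set P) w) ∧ ∃ w, IsGLB ({x, y} : Set P) w) ∧
        IsDistribPoset (P := P) ∧ IsComplementedBy c) →
      (∀ x y z : P,
        ((∀ u ∈ {m : P | IsGLB ({x, y} : Set P) m}, u ≤ z) ↔ (∀ v ∈ impC c y z, x ≤ v)) ∧
        ∀ j : P, IsLUB ({c x, y} : Set P) j → impC c x y = {j})) := by
  have cc : ∀ t : P, c (c t) = t := hinv.2
  have cm : ∀ {x y : P}, x ≤ y → c y ≤ c x := fun h => hinv.1 _ _ h
  have cbot : c ⊥ = ⊤ := le_antisymm le_top ((hoc ⊥).2 (stmt8_pair_ub bot_le le_rfl))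
  have ctop : c ⊤ = ⊥ := by rw [← cbot, cc]
  -- if u is below both q and c q then u ≤ ⊥
  have orth_bot : ∀ {u q : P}, u ≤ q → u ≤ c q → u ≤ ⊥ := by
    intro u q h1 h2
    have hq : q ≤ c u := by have h := cm h2; rwa [cc] at h
    have hcq : c q ≤ c u := cm h1
    have htop : ⊤ ≤ c u := (hoc q).2 (stmt8_pair_ub hq hcq)
    have hcu : c u = ⊤ := le_antisymm le_top htop
    have : u = ⊥ := by rw [← cc u, hcu, ctop]
    exact le_of_eq this
  constructor
  · -- forward direction: adjointness ⇒ Boolean algebra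
    rintro ⟨od, hod⟩
    -- all binary joins exist
    have hjoin : ∀ a z : P, ∃ k, IsLUB ({a, z} : Set P) k := by
      intro a z
      obtain ⟨q, ⟨hqlb, hqmax⟩, -⟩ :=
        hlub.1 {z, c a} ((Set.finite_singleton _).insert _) ⊥ (fun t _ => bot_le)
      have hqz : q ≤ z := stmt8_lb_left hqlb
      have hqca : q ≤ c a := stmt8_lb_right hqlb
      obtain ⟨k, hk⟩ := horth q a hqca
      have hqk : q ≤ k := stmt8_ub_left hk.1
      have hak : a ≤ k := stmt8_ub_right hk.1
      -- every element of od z (c k) is below each t that "joins with k above z"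
      have hmem : ∀ u ∈ od z (c k), ∀ t : P,
          (∀ s ∈ upperBounds ({k, t} : Set P), z ≤ s) → u ≤ t := by
        intro u hu t ht
        refine (hod z (c k) t).mpr ?_ u hu
        intro v hv
        have hv1 : v ∈ upperBounds ({c (c k), t} : Set P) := hv.1
        rw [cc] at hv1
        exact ht v hv1
      have hbot : ∀ u ∈ od z (c k), u ≤ ⊥ := by
        intro u hu
        have huz : u ≤ z := hmem u hu z (fun s hs => stmt8_ub_right hs)
        have huck : u ≤ c k := hmem u hu (c k)
          (fun s hs => le_trans le_top ((hoc k).2 hs))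
        have hucq : u ≤ c q := le_trans huck (cm hqk)
        have huca : u ≤ c a := le_trans huck (cm hak)
        obtain ⟨s₀, hs₀⟩ := horth u q hucq
        have hus₀ : u ≤ s₀ := stmt8_ub_left hs₀.1
        have hqs₀ : q ≤ s₀ := stmt8_ub_right hs₀.1
        have hs₀z : s₀ ≤ z := hs₀.2 (stmt8_pair_ub huz hqz)
        have hs₀ca : s₀ ≤ c a := hs₀.2 (stmt8_pair_ub huca hqca)
        have hs₀q : s₀ = q := hqmax s₀ (stmt8_pair_lb hs₀z hs₀ca) hqs₀
        exact orth_bot (hs₀q ▸ hus₀) hucq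
      have hzk : z ≤ k := by
        refine (hod z (c k) ⊥).mp hbot k ⟨?_, ?_⟩
        · show k ∈ upperBounds ({c (c k), ⊥} : Set P)
          rw [cc]
          exact stmt8_pair_ub le_rfl bot_le
        · intro s hs hsk
          have h := stmt8_ub_left hs
          rw [cc] at h
          exact le_antisymm hsk h
      refine ⟨k, stmt8_pair_ub hak hzk, ?_⟩
      intro s hs
      exact hk.2 (stmt8_pair_ub (le_trans hqz (stmt8_ub_right hs)) (stmt8_ub_left hs))
    -- all binary meets exist (De Morgan)
    have hmeet : ∀ x y : P, ∃ m, IsGLB ({x, y} : Set P) m := by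
      intro x y
      obtain ⟨j, hj⟩ := hjoin (c x) (c y)
      refine ⟨c j, stmt8_pair_lb ?_ ?_, ?_⟩
      · have h := cm (stmt8_ub_left hj.1); rwa [cc] at h
      · have h := cm (stmt8_ub_right hj.1); rwa [cc] at h
      · intro t ht
        have h1 : t ≤ x := stmt8_lb_left ht
        have h2 : t ≤ y := stmt8_lb_right ht
        have hjt : j ≤ c t := hj.2 (stmt8_pair_ub (cm h1) (cm h2))
        have h := cm hjt; rwa [cc] at h
    -- choice functions for sup and inf
    obtain ⟨Jf, hS⟩ := Classical.axiomOfChoice (fun a : P =>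
      Classical.axiomOfChoice (fun z : P => hjoin a z))
    obtain ⟨Mf, hM⟩ := Classical.axiomOfChoice (fun a : P =>
      Classical.axiomOfChoice (fun z : P => hmeet a z))
    have leS1 : ∀ a b : P, a ≤ Jf a b := fun a b => stmt8_ub_left (hS a b).1
    have leS2 : ∀ a b : P, b ≤ Jf a b := fun a b => stmt8_ub_right (hS a b).1
    have S_le : ∀ {a b s : P}, a ≤ s → b ≤ s → Jf a b ≤ s :=
      fun h1 h2 => (hS _ _).2 (stmt8_pair_ub h1 h2)
    have leM1 : ∀ a b : P, Mf a b ≤ a := fun a b => stmt8_lb_left (hM a b).1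
    have leM2 : ∀ a b : P, Mf a b ≤ b := fun a b => stmt8_lb_right (hM a b).1
    have le_M : ∀ {a b s : P}, s ≤ a → s ≤ b → s ≤ Mf a b :=
      fun h1 h2 => (hM _ _).2 (stmt8_pair_lb h1 h2)
    have S_uniq : ∀ {a b s : P}, IsLUB ({a, b} : Set P) s → s = Jf a b :=
      fun h => h.unique (hS _ _)
    have M_uniq : ∀ {a b s : P}, IsGLB ({a, b} : Set P) s → s = Mf a b :=
      fun h => h.unique (hM _ _)
    -- the residuation form of adjointness
    have F3 : ∀ x a t : P, (∀ u ∈ od x (c a), u ≤ t) ↔ x ≤ Jf a t := by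
      intro x a t
      rw [hod x (c a) t]
      have himp : impC c (c a) t = {Jf a t} := by
        show MinE (upperBounds ({c (c a), t} : Set P)) = {Jf a t}
        rw [cc]
        exact stmt8_minE_of_isLUB (hS a t)
      rw [himp]
      simp
    -- join distributes over meet
    have dS : ∀ a b d : P, Jf a (Mf b d) = Mf (Jf a b) (Jf a d) := by
      intro a b d
      apply le_antisymm
      · exact le_M (S_le (leS1 a b) (le_trans (leM1 b d) (leS2 a b)))
          (S_le (leS1 a d) (le_trans (leM2 b d) (leS2 a d)))
      · have h1 : ∀ u ∈ od (Mf (Jf a b) (Jf a d)) (c a), u ≤ b :=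
          (F3 _ a b).mpr (leM1 _ _)
        have h2 : ∀ u ∈ od (Mf (Jf a b) (Jf a d)) (c a), u ≤ d :=
          (F3 _ a d).mpr (leM2 _ _)
        exact (F3 _ a (Mf b d)).mp (fun u hu => le_M (h1 u hu) (h2 u hu))
    have M_assoc : ∀ a b d : P, Mf a (Mf b d) = Mf (Mf a b) d := by
      intro a b d
      refine (M_uniq ⟨stmt8_pair_lb ?_ ?_, ?_⟩).symm
      · exact le_trans (leM1 (Mf a b) d) (leM1 a b)
      · exact le_M (le_trans (leM1 _ _) (leM2 a b)) (leM2 _ _)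
      · intro t ht
        have h1 : t ≤ a := stmt8_lb_left ht
        have h2 : t ≤ Mf b d := stmt8_lb_right ht
        exact le_M (le_M h1 (le_trans h2 (leM1 b d))) (le_trans h2 (leM2 b d))
    have S_comm : ∀ a b : P, Jf a b = Jf b a := by
      intro a b
      refine (S_uniq ?_).symm
      rw [Set.pair_comm]
      exact hS b a
    have absS : ∀ {a b : P}, a ≤ b → Jf a b = b :=
      fun h => (S_uniq ⟨stmt8_pair_ub h le_rfl, fun s hs => stmt8_ub_right hs⟩).symm
    have absM : ∀ {a b : P}, b ≤ a → Mf a b = b :=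
      fun h => (M_uniq ⟨stmt8_pair_lb h le_rfl, fun s hs => stmt8_lb_right hs⟩).symm
    -- meet distributes over join
    have dM : ∀ x y z : P, Mf (Jf x y) z = Jf (Mf x z) (Mf y z) := by
      intro x y z
      have h1 : Jf (Mf y z) z = z := absS (leM2 y z)
      have h2 : Mf (Jf x z) z = z := absM (leS2 x z)
      calc Mf (Jf x y) z = Mf (Jf x y) (Mf (Jf x z) z) := by rw [h2]
        _ = Mf (Mf (Jf x y) (Jf x z)) z := M_assoc _ _ _
        _ = Mf (Jf x (Mf y z)) z := by rw [dS x y z]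
        _ = Mf (Jf (Mf y z) x) z := by rw [S_comm x (Mf y z)]
        _ = Mf (Jf (Mf y z) x) (Jf (Mf y z) z) := by rw [h1]
        _ = Jf (Mf y z) (Mf x z) := (dS _ x z).symm
        _ = Jf (Mf x z) (Mf y z) := S_comm _ _
    have hdistrib : IsDistribPoset (P := P) := by
      intro x y z
      ext p
      constructor
      · intro hp
        have h1 : p ≤ Jf x y := hp (mem_union_left _ (hS x y).1)
        have h2 : p ≤ z := hp (mem_union_right _ rfl)
        have hple : p ≤ Mf (Jf x y) z := le_M h1 h2
        rw [dM] at hple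
        intro t ht
        have hA : Mf x z ≤ t := ht (mem_union_left _ (hM x z).1)
        have hB : Mf y z ≤ t := ht (mem_union_right _ (hM y z).1)
        exact le_trans hple (S_le hA hB)
      · intro hp
        have hub : Jf (Mf x z) (Mf y z) ∈
            upperBounds (lowerBounds ({x, z} : Set P) ∪ lowerBounds ({y, z} : Set P)) := by
          rintro t (ht | ht)
          · exact le_trans ((hM x z).2 ht) (leS1 _ _)
          · exact le_trans ((hM y z).2 ht) (leS2 _ _)
        have hple : p ≤ Jf (Mf x z) (Mf y z) := hp hub
        rw [← dM] at hple
        rintro t (ht | rfl)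
        · exact le_trans (le_trans hple (leM1 _ _)) ((hS x y).2 ht)
        · exact le_trans hple (leM2 _ _)
    have hcompl : IsComplementedBy c := by
      intro x
      constructor
      · ext p
        constructor
        · intro hp
          have hpbot : p ≤ ⊥ := orth_bot (stmt8_lb_left hp) (stmt8_lb_right hp)
          intro t _
          exact le_trans hpbot bot_le
        · intro hp
          exact stmt8_pair_lb (hp (mem_univ x)) (hp (mem_univ (c x)))
      · ext s
        constructor
        · intro hs
          have htop : ⊤ ≤ s := (hoc x).2 hs
          intro t _
          exact le_trans le_top htop
        · intro hs
          exact stmt8_pair_ub (hs (mem_univ x)) (hs (mem_univ (c x)))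
    exact ⟨fun x y => ⟨hjoin x y, hmeet x y⟩, hdistrib, hcompl⟩
  · -- backward direction: Boolean algebra ⇒ adjointness for ∧
    rintro ⟨Hlat, Hd, Hc⟩ x y z
    obtain ⟨m, hm⟩ := (Hlat x y).2
    obtain ⟨j, hj⟩ := (Hlat (c y) z).1
    have himp : impC c y z = {j} := stmt8_minE_of_isLUB hj
    constructor
    · -- the adjunction for ⊙ = ∧
      have core : m ≤ z ↔ x ≤ j := by
        constructor
        · intro hmz
          have hx : x ∈ lowerBounds (upperBounds ({y, c y} : Set P) ∪ {x}) := by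
            rintro t (ht | rfl)
            · rw [(Hc y).2] at ht
              exact ht (mem_univ x)
            · exact le_rfl
          rw [Hd y (c y) x] at hx
          apply hx
          rintro t (ht | ht)
          · have h1 : t ≤ m := hm.2 (stmt8_pair_lb (stmt8_lb_right ht) (stmt8_lb_left ht))
            exact le_trans h1 (le_trans hmz (stmt8_ub_right hj.1))
          · exact le_trans (stmt8_lb_left ht) (stmt8_ub_left hj.1)
        · intro hxj
          obtain ⟨m', hm'⟩ := (Hlat z y).2
          have hmem : m ∈ lowerBounds (upperBounds ({c y, z} : Set P) ∪ {y}) := by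
            rintro t (ht | rfl)
            · exact le_trans (le_trans (stmt8_lb_left hm.1) hxj) (hj.2 ht)
            · exact stmt8_lb_right hm.1
          rw [Hd (c y) z y] at hmem
          have hm'ub : m' ∈
              upperBounds (lowerBounds ({c y, y} : Set P) ∪ lowerBounds ({z, y} : Set P)) := by
            rintro t (ht | ht)
            · have h1 : t ∈ lowerBounds ({y, c y} : Set P) :=
                stmt8_pair_lb (stmt8_lb_right ht) (stmt8_lb_left ht)
              rw [(Hc y).1] at h1
              exact h1 (mem_univ m')
            · exact hm'.2 ht
          exact le_trans (hmem hm'ub) (stmt8_lb_left hm'.1)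
      constructor
      · intro hL v hv
        rw [himp, mem_singleton_iff] at hv
        subst hv
        exact core.mp (hL m hm)
      · intro hR u hu
        have he : u = m := IsGLB.unique hu hm
        rw [he]
        refine core.mpr (hR j ?_)
        rw [himp]
        rfl
    · intro j' hj'
      exact stmt8_minE_of_isLUB hj'
end

section
/- In an orthogonal lub-complete poset, the Kalmbach implication x →_K y := Max L(x',y) ∨ Max L(x',y') ∨ (x ∧ Min U(x',y)) is well defined; in particular, every element of Max L(x',y') is orthogonal to every element of Max L(x',y), and x' ≤ u for every u ∈ Min U(x',y), so all joins and meets in the definition exist. -/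
open Set

variable {P : Type*} [PartialOrder P] [BoundedOrder P]

/-- well-definedness of the Kalmbach implication. -/
theorem stmt9 (c : P → P) (hinv : HasAntitoneInvol c) (horth : IsOrthogonalPoset c)
    (hlub : IsLubComplete (P := P)) :
    ∀ x y : P,
      (∀ b ∈ MaxE (lowerBounds ({c x, c y} : Set P)),
        ∀ a ∈ MaxE (lowerBounds ({c x, y} : Set P)), b ≤ c a) ∧
      (∀ u ∈ MinE (upperBounds ({c x, y} : Set P)), c x ≤ u) ∧
      (∀ a ∈ MaxE (lowerBounds ({c x, y} : Set P)),
        ∀ b ∈ MaxE (lowerBounds ({c x, c y} : Set P)),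
        ∀ u ∈ MinE (upperBounds ({c x, y} : Set P)),
          ∃ m, IsGLB ({x, u} : Set P) m ∧ ∃ z, IsLUB ({a, b, m} : Set P) z) := by
  obtain ⟨hant, hinvol⟩ := hinv
  have le_c : ∀ p q : P, p ≤ c q → q ≤ c p := by
    intro p q h
    have := hant _ _ h
    rwa [hinvol] at this
  have glb_of_lub : ∀ p q z : P, IsLUB ({p, q} : Set P) z → IsGLB ({c p, c q} : Set P) (c z) := by
    intro p q z hz
    constructor
    · rintro w hw
      rcases hw with rfl | hw
      · exact hant _ _ (hz.1 (Set.mem_insert _ _))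
      · rcases hw with rfl
        exact hant _ _ (hz.1 (Set.mem_insert_of_mem _ rfl))
    · intro w hw
      have h1 : w ≤ c p := hw (Set.mem_insert _ _)
      have h2 : w ≤ c q := hw (Set.mem_insert_of_mem _ rfl)
      have hz' : z ≤ c w := by
        apply hz.2
        rintro v hv
        rcases hv with rfl | hv
        · exact le_c _ _ h1
        · rcases hv with rfl
          exact le_c _ _ h2
      have := hant _ _ hz'
      calc w = c (c w) := (hinvol w).symm
        _ ≤ c z := this
  intro x y
  refine ⟨?_, ?_, ?_⟩
  · intro b hb a ha
    have hbcy : b ≤ c y := hb.1 (Set.mem_insert_of_mem _ rfl)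
    have hay : a ≤ y := ha.1 (Set.mem_insert_of_mem _ rfl)
    exact le_trans hbcy (hant _ _ hay)
  · intro u hu
    exact hu.1 (Set.mem_insert _ _)
  · intro a ha b hb u hu
    have hacx : a ≤ c x := ha.1 (Set.mem_insert _ _)
    have hbcx : b ≤ c x := hb.1 (Set.mem_insert _ _)
    have hcxu : c x ≤ u := hu.1 (Set.mem_insert _ _)
    -- m := x ∧ u exists: c x ≤ u means c x ≤ c (c u), so lub {c x, c u} exists
    have hcucx : c u ≤ c (c x) := hant _ _ hcxu
    obtain ⟨s, hs⟩ := horth (c x) (c u) (by rwa [hinvol] at hcucx ⊢)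
    have hm : IsGLB ({c (c x), c (c u)} : Set P) (c s) := glb_of_lub _ _ _ hs
    rw [hinvol, hinvol] at hm
    set m := c s with hmdef
    refine ⟨m, hm, ?_⟩
    -- lub {a, b} exists since b ≤ c a
    have hba : b ≤ c a := le_trans (hb.1 (Set.mem_insert_of_mem _ rfl))
      (hant _ _ (ha.1 (Set.mem_insert_of_mem _ rfl)))
    obtain ⟨t, ht⟩ := horth b a hba
    have hta : a ≤ t := ht.1 (Set.mem_insert_of_mem _ rfl)
    have htb : b ≤ t := ht.1 (Set.mem_insert _ _)
    -- m ≤ x, and x ≤ c a, x ≤ c b, so m ≤ c t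
    have hmx : m ≤ x := hm.1 (Set.mem_insert _ _)
    have hxca : x ≤ c a := le_c _ _ hacx
    have hxcb : x ≤ c b := le_c _ _ hbcx
    have htcm : t ≤ c m := by
      apply ht.2
      rintro v hv
      rcases hv with rfl | hv
      · exact le_c _ _ (le_trans hmx hxcb)
      · rcases hv with rfl
        exact le_c _ _ (le_trans hmx hxca)
    obtain ⟨z, hz⟩ := horth t m htcm
    -- z = t ∨ c (c m) ... careful: horth t (c m) needs t ≤ c (c m); we have t ≤ c m,
    -- so use horth t m with t ≤ c m
    refine ⟨z, ?_, ?_⟩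
    · rintro v hv
      rcases hv with rfl | hv
      · exact le_trans hta (hz.1 (Set.mem_insert _ _))
      · rcases hv with rfl | hv
        · exact le_trans htb (hz.1 (Set.mem_insert _ _))
        · rcases hv with rfl
          exact hz.1 (Set.mem_insert_of_mem _ rfl)
    · intro w hw
      have hwa : a ≤ w := hw (Set.mem_insert _ _)
      have hwb : b ≤ w := hw (Set.mem_insert_of_mem _ (Set.mem_insert _ _))
      have hwm : m ≤ w := hw (Set.mem_insert_of_mem _ (Set.mem_insert_of_mem _ rfl))
      apply hz.2
      rintro v hv
      rcases hv with rfl | hv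
      · apply ht.2
        rintro v' hv'
        rcases hv' with rfl | hv'
        · exact hwb
        · rcases hv' with rfl
          exact hwa
      · rcases hv with rfl
        exact hwm
end

section
/- An orthogonal lub-complete poset P is paraorthomodular if and only if for all x, y ∈ P, x →_K y = {1} implies x ≤ y, and also if and only if x →_N y = {1} implies x ≤ y. -/
open Set

variable {P : Type*} [PartialOrder P] [BoundedOrder P]

private lemma lb_pair {s t u : P} (h1 : u ≤ s) (h2 : u ≤ t) :
    u ∈ lowerBounds ({s, t} : Set P) := by
  intro a ha
  simp only [Set.mem_insert_iff, Set.mem_singleton_iff] at ha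
  rcases ha with rfl | rfl <;> assumption

private lemma ub_pair {s t u : P} (h1 : s ≤ u) (h2 : t ≤ u) :
    u ∈ upperBounds ({s, t} : Set P) := by
  intro a ha
  simp only [Set.mem_insert_iff, Set.mem_singleton_iff] at ha
  rcases ha with rfl | rfl <;> assumption

private lemma ub_triple {s t r u : P} (h1 : s ≤ u) (h2 : t ≤ u) (h3 : r ≤ u) :
    u ∈ upperBounds ({s, t, r} : Set P) := by
  intro a ha
  simp only [Set.mem_insert_iff, Set.mem_singleton_iff] at ha
  rcases ha with rfl | rfl | rfl <;> assumption

/-- paraorthomodular iff x →_K y = {1} implies x ≤ y, iff x →_N y = {1} implies x ≤ y. -/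
theorem stmt12 (c : P → P) (hinv : HasAntitoneInvol c) (horth : IsOrthogonalPoset c)
    (hlub : IsLubComplete (P := P)) :
    (IsParaOM c ↔ ∀ x y : P, impK c x y = {(⊤ : P)} → x ≤ y) ∧
    (IsParaOM c ↔ ∀ x y : P, impN c x y = {(⊤ : P)} → x ≤ y) := by
  obtain ⟨hmono, hii⟩ := hinv
  have ctop : c ⊤ = ⊥ := by
    have h1 : c ⊤ ≤ c (c ⊥) := hmono _ _ le_top
    rw [hii] at h1
    exact le_bot_iff.mp h1
  have cbot : c ⊥ = ⊤ := by rw [← ctop, hii]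
  have hle : ∀ {p q : P}, c q ≤ c p → p ≤ q := by
    intro p q h
    have := hmono _ _ h
    rwa [hii, hii] at this
  have hKiff : IsParaOM c ↔ ∀ x y : P, impK c x y = {(⊤ : P)} → x ≤ y := by
    constructor
    · -- paraorthomodular → Kalmbach condition
      intro hpom x y hK
      have htop : (⊤ : P) ∈ impK c x y := by rw [hK]; exact rfl
      obtain ⟨a, ha, b, hb, u, hu, m, hmglb, hzlub⟩ := htop
      have hacx : a ≤ c x := ha.1 (Set.mem_insert _ _)
      have hay : a ≤ y := ha.1 (Set.mem_insert_of_mem _ rfl)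
      have hbcx : b ≤ c x := hb.1 (Set.mem_insert _ _)
      have hucx : c x ≤ u := hu.1 (Set.mem_insert _ _)
      have huy : y ≤ u := hu.1 (Set.mem_insert_of_mem _ rfl)
      have hmu : m ≤ u := hmglb.1 (Set.mem_insert_of_mem _ rfl)
      -- u is an upper bound of {a, b, m}, hence u = ⊤
      have hutop : u = ⊤ :=
        top_le_iff.mp (hzlub.2 (ub_triple (hay.trans huy) (hbcx.trans hucx) hmu))
      -- every upper bound of {c x, y} is ⊤
      have hUtop : ∀ v ∈ upperBounds ({c x, y} : Set P), v = ⊤ := by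
        intro v hv
        exact (hu.2 v hv (hutop ▸ le_top)).trans hutop
      -- every common lower bound of x and c y is ⊥
      have hCbot : ∀ t : P, t ≤ x → t ≤ c y → t = ⊥ := by
        intro t h1 h2
        have hy : y ≤ c t := by
          have := hmono _ _ h2; rwa [hii] at this
        have : c t = ⊤ := hUtop (c t) (ub_pair (hmono _ _ h1) hy)
        rw [← hii t, this, ctop]
      -- choose maximal lower bounds a0, b0
      obtain ⟨a0, ha0, -⟩ := hlub.1 ({c x, y} : Set P) (Set.toFinite _) ⊥
        (lb_pair bot_le bot_le)
      obtain ⟨b0, hb0, -⟩ := hlub.1 ({c x, c y} : Set P) (Set.toFinite _) ⊥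
        (lb_pair bot_le bot_le)
      have ha0cx : a0 ≤ c x := ha0.1 (Set.mem_insert _ _)
      have ha0y : a0 ≤ y := ha0.1 (Set.mem_insert_of_mem _ rfl)
      have hb0cx : b0 ≤ c x := hb0.1 (Set.mem_insert _ _)
      have hb0cy : b0 ≤ c y := hb0.1 (Set.mem_insert_of_mem _ rfl)
      -- the join d = a0 ∨ b0 exists
      have ha0cb0 : a0 ≤ c b0 := by
        have := hmono _ _ hb0cy; rw [hii] at this
        exact ha0y.trans this
      obtain ⟨d, hd⟩ := horth a0 b0 ha0cb0
      have hdcx : d ≤ c x := hd.2 (ub_pair ha0cx hb0cx)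
      -- the join e = x ∨ d exists
      have hxcd : x ≤ c d := by
        have := hmono _ _ hdcx; rwa [hii] at this
      obtain ⟨e, he⟩ := horth x d hxcd
      have hde : d ≤ e := he.1 (Set.mem_insert_of_mem _ rfl)
      have hxe : x ≤ e := he.1 (Set.mem_insert _ _)
      -- e ∈ impK c x y, so e = ⊤
      have heK : e ∈ impK c x y := by
        refine ⟨a0, ha0, b0, hb0, ⊤, ⟨ub_pair le_top le_top, fun w hw _ => hUtop w hw⟩,
          x, ⟨lb_pair le_rfl le_top, fun t ht => ht (Set.mem_insert _ _)⟩, ?_⟩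
        constructor
        · exact ub_triple ((hd.1 (Set.mem_insert _ _)).trans hde)
            ((hd.1 (Set.mem_insert_of_mem _ rfl)).trans hde) hxe
        · intro w hw
          have hdw : d ≤ w := hd.2 (ub_pair (hw (Set.mem_insert _ _))
            (hw (Set.mem_insert_of_mem _ (Set.mem_insert _ _))))
          have hxw : x ≤ w := hw (Set.mem_insert_of_mem _ (Set.mem_insert_of_mem _ rfl))
          exact he.2 (ub_pair hxw hdw)
      have hetop : e = ⊤ := by rw [hK] at heK; exact heK
      -- paraorthomodularity gives d = c x
      have hdglb : IsGLB ({c d, c x} : Set P) ⊥ := by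
        constructor
        · exact lb_pair bot_le bot_le
        · intro t ht
          have htcd : t ≤ c d := ht (Set.mem_insert _ _)
          have htcx : t ≤ c x := ht (Set.mem_insert_of_mem _ rfl)
          have hxct : x ≤ c t := by
            have := hmono _ _ htcx; rwa [hii] at this
          have hdct : d ≤ c t := by
            have := hmono _ _ htcd; rwa [hii] at this
          have : e ≤ c t := he.2 (ub_pair hxct hdct)
          rw [hetop, top_le_iff] at this
          rw [← hii t, this, ctop]
      have hdeq : d = c x := hpom d (c x) hdcx hdglb
      -- paraorthomodularity gives b0 = c y
      have hb0glb : IsGLB ({c b0, c y} : Set P) ⊥ := by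
        constructor
        · exact lb_pair bot_le bot_le
        · intro t ht
          have htcb0 : t ≤ c b0 := ht (Set.mem_insert _ _)
          have htcy : t ≤ c y := ht (Set.mem_insert_of_mem _ rfl)
          have ha0ct : a0 ≤ c t := by
            have h1 : t ≤ c a0 := htcy.trans (hmono _ _ ha0y)
            have := hmono _ _ h1; rwa [hii] at this
          have hb0ct : b0 ≤ c t := by
            have := hmono _ _ htcb0; rwa [hii] at this
          have hcxct : c x ≤ c t := hdeq ▸ hd.2 (ub_pair ha0ct hb0ct)
          have htx : t ≤ x := by
            have := hmono _ _ hcxct; rwa [hii, hii] at this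
          exact le_of_eq (hCbot t htx htcy)
      have hb0eq : b0 = c y := hpom b0 (c y) hb0cy hb0glb
      exact hle (hb0eq ▸ hb0cx)
    · -- Kalmbach condition → paraorthomodular
      intro hyp x y hxy hglb
      have hbot : ∀ t : P, t ≤ c x → t ≤ y → t = ⊥ := by
        intro t h1 h2
        exact le_bot_iff.mp (hglb.2 (lb_pair h1 h2))
      have hbot2 : ∀ t : P, t ≤ x → t ≤ c y → t = ⊥ := by
        intro t h1 h2
        exact hbot t (h2.trans (hmono _ _ hxy)) (h1.trans hxy)
      have hub2 : ∀ w ∈ upperBounds ({x, c y} : Set P), w = ⊤ := by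
        intro w hw
        have h1 : c w ≤ c x := hmono _ _ (hw (Set.mem_insert _ _))
        have h2 : c w ≤ y := by
          have := hmono _ _ (hw (Set.mem_insert_of_mem _ rfl)); rwa [hii] at this
        have : c w = ⊥ := hbot (c w) h1 h2
        rw [← hii w, this, cbot]
      have hubxx : ∀ w ∈ upperBounds ({x, c x} : Set P), w = ⊤ := by
        intro w hw
        have h1 : c w ≤ c x := hmono _ _ (hw (Set.mem_insert _ _))
        have h2 : c w ≤ y := by
          have : c w ≤ x := by
            have := hmono _ _ (hw (Set.mem_insert_of_mem _ rfl)); rwa [hii] at this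
          exact this.trans hxy
        have : c w = ⊥ := hbot (c w) h1 h2
        rw [← hii w, this, cbot]
      have himp : impK c (c x) (c y) = {(⊤ : P)} := by
        ext z
        simp only [impK, Set.mem_setOf_eq, hii, Set.mem_singleton_iff]
        constructor
        · rintro ⟨a, ha, b, hb, u, hu, m, hm, hz⟩
          have hutop : u = ⊤ := hub2 u hu.1
          have hbx : b = x := (hb.2 x (lb_pair le_rfl hxy) (hb.1 (Set.mem_insert _ _))).symm
          have hmcx : m = c x := le_antisymm (hm.1 (Set.mem_insert _ _))
            (hm.2 (lb_pair le_rfl (hutop ▸ le_top)))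
          have hxz : x ≤ z := hbx ▸ hz.1 (Set.mem_insert_of_mem _ (Set.mem_insert _ _))
          have hcxz : c x ≤ z := hmcx ▸ hz.1
            (Set.mem_insert_of_mem _ (Set.mem_insert_of_mem _ rfl))
          exact hubxx z (ub_pair hxz hcxz)
        · rintro rfl
          refine ⟨⊥, ⟨lb_pair bot_le bot_le, ?_⟩, x, ⟨lb_pair le_rfl hxy, ?_⟩,
            ⊤, ⟨ub_pair le_top le_top, fun w hw _ => hub2 w hw⟩,
            c x, ⟨lb_pair le_rfl le_top, fun t ht => ht (Set.mem_insert _ _)⟩, ?_⟩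
          · intro w hw _
            exact hbot2 w (hw (Set.mem_insert _ _)) (hw (Set.mem_insert_of_mem _ rfl))
          · intro w hw h
            exact le_antisymm (hw (Set.mem_insert _ _)) h
          · constructor
            · exact fun w _ => le_top
            · intro w hw
              have hxw : x ≤ w := hw (Set.mem_insert_of_mem _ (Set.mem_insert _ _))
              have hcxw : c x ≤ w := hw (Set.mem_insert_of_mem _ (Set.mem_insert_of_mem _ rfl))
              exact (hubxx w (ub_pair hxw hcxw)).ge
      have : c x ≤ c y := hyp (c x) (c y) himp
      exact le_antisymm hxy (hle this)
  refine ⟨hKiff, hKiff.trans ?_⟩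
  constructor
  · intro h x y hN
    exact hle (h (c y) (c x) hN)
  · intro h x y hK
    have h2 : impN c (c y) (c x) = {(⊤ : P)} := by
      rw [impN, hii, hii]; exact hK
    exact hle (h (c y) (c x) h2)
end

section
/- In an orthogonal lub-complete poset, the Sasaki implication x →_S y := x' ∨ Max L(x,y) satisfies: x' ≤ u for all u ∈ x →_S y; if x ≤ y then x →_S y = {x ∨ x'}; if x' ⊥ y' then x →_S y = x' ∨ (x ∧ y); if y ≤ x then x →_S y = {x' ∨ y}; moreover x →_S 1 = {x ∨ x'}, 1 →_S x = {x}, x →_S 0 = {x'}, 0 →_S x = {1}. -/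
open Set

variable {P : Type*} [PartialOrder P] [BoundedOrder P]

section Helpers

lemma maxE_lb_eq_of_isGLB {A : Set P} {m : P} (h : IsGLB A m) :
    MaxE (lowerBounds A) = {m} := by
  ext w
  constructor
  · rintro ⟨hw, hmax⟩
    exact (hmax m h.1 (h.2 hw)).symm
  · rintro rfl
    exact ⟨h.1, fun v hv hle => le_antisymm (h.2 hv) hle⟩

lemma isGLB_pair_left {x y : P} (h : x ≤ y) : IsGLB ({x, y} : Set P) x := by
  constructor
  · intro z hz
    rcases hz with rfl | hz
    · exact le_rfl
    · simp_all
  · intro v hv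
    exact hv (by simp)

lemma isGLB_pair_right {x y : P} (h : y ≤ x) : IsGLB ({x, y} : Set P) y := by
  rw [Set.pair_comm]
  exact isGLB_pair_left h

lemma glb_compl {c : P → P} (hinv : HasAntitoneInvol c) {a b j : P}
    (h : IsLUB ({a, b} : Set P) j) : IsGLB ({c a, c b} : Set P) (c j) := by
  constructor
  · intro z hz
    rcases hz with rfl | hz
    · exact hinv.1 _ _ (h.1 (by simp))
    · simp only [Set.mem_singleton_iff] at hz
      subst hz
      exact hinv.1 _ _ (h.1 (by simp))
  · intro v hv
    have ha : a ≤ c v := by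
      have := hinv.1 _ _ (hv (show c a ∈ ({c a, c b} : Set P) by simp))
      rwa [hinv.2] at this
    have hb : b ≤ c v := by
      have := hinv.1 _ _ (hv (show c b ∈ ({c a, c b} : Set P) by simp))
      rwa [hinv.2] at this
    have hj : j ≤ c v := h.2 (by
      intro z hz
      simp only [Set.mem_insert_iff, Set.mem_singleton_iff] at hz
      rcases hz with rfl | rfl
      · exact ha
      · exact hb)
    have := hinv.1 _ _ hj
    rwa [hinv.2] at this

lemma cInvolTop {c : P → P} (hinv : HasAntitoneInvol c) : c (⊤ : P) = ⊥ := by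
  have : c (⊤ : P) ≤ c (c ⊥) := hinv.1 _ _ le_top
  rw [hinv.2] at this
  exact le_antisymm this bot_le

lemma cInvolBot {c : P → P} (hinv : HasAntitoneInvol c) : c (⊥ : P) = ⊤ := by
  have : c (c (⊤ : P)) ≤ c ⊥ := hinv.1 _ _ bot_le
  rw [hinv.2] at this
  exact le_antisymm le_top this

lemma impS_eq_singleton {c : P → P} {x y w0 s : P}
    (hmax : MaxE (lowerBounds ({x, y} : Set P)) = {w0})
    (hs : IsLUB ({c x, w0} : Set P) s) : impS c x y = {s} := by
  ext z
  constructor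
  · rintro ⟨w, hw, hz⟩
    rw [hmax] at hw
    subst hw
    exact hz.unique hs
  · rintro rfl
    exact ⟨w0, by rw [hmax]; rfl, hs⟩

end Helpers

/-- basic properties of the Sasaki implication. -/
theorem stmt15 (c : P → P) (hinv : HasAntitoneInvol c) (horth : IsOrthogonalPoset c)
    (hlub : IsLubComplete (P := P)) :
    ∀ x y : P,
      (∀ u ∈ impS c x y, c x ≤ u) ∧
      (x ≤ y → ∀ s : P, IsLUB ({x, c x} : Set P) s → impS c x y = {s}) ∧
      (c x ≤ c (c y) →
        impS c x y = {z | ∃ m, IsGLB ({x, y} : Set P) m ∧ IsLUB {c x, m} z}) ∧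
      (y ≤ x → ∀ j : P, IsLUB ({c x, y} : Set P) j → impS c x y = {j}) ∧
      (∀ s : P, IsLUB ({x, c x} : Set P) s → impS c x ⊤ = {s}) ∧
      impS c ⊤ x = {x} ∧ impS c x ⊥ = {c x} ∧ impS c ⊥ x = {(⊤ : P)} := by
  intro x y
  have hIIa : ∀ u ∈ impS c x y, c x ≤ u := by
    rintro u ⟨w, _, hu⟩
    exact hu.1 (by simp)
  refine ⟨hIIa, ?_, ?_, ?_, ?_, ?_, ?_, ?_⟩
  · -- x ≤ y
    intro hxy s hs
    have hglb : IsGLB ({x, y} : Set P) x := isGLB_pair_left hxy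
    have hs' : IsLUB ({c x, x} : Set P) s := by rwa [Set.pair_comm]
    exact impS_eq_singleton (maxE_lb_eq_of_isGLB hglb) hs'
  · -- c x ≤ c (c y)
    intro h
    obtain ⟨j, hj⟩ := horth (c x) (c y) h
    have hglb : IsGLB ({x, y} : Set P) (c j) := by
      have := glb_compl hinv hj
      rwa [hinv.2, hinv.2] at this
    ext z
    constructor
    · rintro ⟨w, hw, hz⟩
      rw [maxE_lb_eq_of_isGLB hglb] at hw
      subst hw
      exact ⟨c j, hglb, hz⟩
    · rintro ⟨m, hm, hz⟩
      refine ⟨m, ?_, hz⟩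
      rw [maxE_lb_eq_of_isGLB hglb]
      exact hm.unique hglb
  · -- y ≤ x
    intro hyx j hj
    exact impS_eq_singleton (maxE_lb_eq_of_isGLB (isGLB_pair_right hyx)) hj
  · -- x → ⊤
    intro s hs
    have hglb : IsGLB ({x, (⊤ : P)} : Set P) x := isGLB_pair_left le_top
    have hs' : IsLUB ({c x, x} : Set P) s := by rwa [Set.pair_comm]
    exact impS_eq_singleton (maxE_lb_eq_of_isGLB hglb) hs'
  · -- ⊤ → x
    have hglb : IsGLB ({(⊤ : P), x} : Set P) x := isGLB_pair_right le_top
    have hs : IsLUB ({c (⊤ : P), x} : Set P) x := by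
      rw [cInvolTop hinv]
      constructor
      · rintro z (rfl | hz)
        · exact bot_le
        · simp_all
      · intro v hv
        exact hv (by simp)
    exact impS_eq_singleton (maxE_lb_eq_of_isGLB hglb) hs
  · -- x → ⊥
    have hglb : IsGLB ({x, (⊥ : P)} : Set P) ⊥ := isGLB_pair_right bot_le
    have hs : IsLUB ({c x, (⊥ : P)} : Set P) (c x) := by
      constructor
      · rintro z (rfl | hz)
        · exact le_rfl
        · simp_all
      · intro v hv
        exact hv (by simp)
    exact impS_eq_singleton (maxE_lb_eq_of_isGLB hglb) hs
  · -- ⊥ → x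
    have hglb : IsGLB ({(⊥ : P), x} : Set P) ⊥ := isGLB_pair_left bot_le
    have hs : IsLUB ({c (⊥ : P), (⊥ : P)} : Set P) ⊤ := by
      rw [cInvolBot hinv]
      constructor
      · rintro z (rfl | hz)
        · exact le_rfl
        · exact le_top
      · intro v hv
        exact hv (by simp)
    exact impS_eq_singleton (maxE_lb_eq_of_isGLB hglb) hs
end

section
/- In an orthogonal lub-complete poset, if x ≤ y then z →_S x ≤₁ z →_S y, i.e., for every u ∈ z →_S x there exists v ∈ z →_S y with u ≤ v. -/
open Set

variable {P : Type*} [PartialOrder P] [BoundedOrder P]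

/-- x ≤ y implies z →_S x ≤₁ z →_S y. -/
theorem stmt16 (c : P → P) (hinv : HasAntitoneInvol c) (horth : IsOrthogonalPoset c)
    (hlub : IsLubComplete (P := P)) :
    ∀ x y z : P, x ≤ y → ∀ u ∈ impS c z x, ∃ v ∈ impS c z y, u ≤ v := by
  intro x y z hxy u hu
  obtain ⟨w, ⟨hwL, -⟩, hlubu⟩ := hu
  have hwL' : w ∈ lowerBounds ({z, y} : Set P) := by
    intro a ha
    rcases ha with rfl | ha
    · exact hwL (Or.inl rfl)
    · simp only [Set.mem_singleton_iff] at ha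
      subst ha
      exact (hwL (Or.inr rfl)).trans hxy
  obtain ⟨m, ⟨hm, hmax⟩, hwm⟩ :=
    hlub.1 ({z, y} : Set P) (Set.toFinite _) w hwL'
  have hmz : m ≤ c (c z) := by rw [hinv.2]; exact hm (Or.inl rfl)
  obtain ⟨v, hv⟩ := horth m (c z) hmz
  have hv' : IsLUB ({c z, m} : Set P) v := by rwa [Set.pair_comm]
  refine ⟨v, ⟨m, ⟨hm, hmax⟩, hv'⟩, ?_⟩
  apply hlubu.2
  intro a ha
  rcases ha with rfl | ha
  · exact hv'.1 (Or.inl rfl)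
  · simp only [Set.mem_singleton_iff] at ha
    subst ha
    exact hwm.trans (hv'.1 (Or.inr rfl))
end

section
/- An orthogonal lub-complete poset P is orthocomplemented if and only if for all x, y, x ≤ y implies x →_S y = {1}, equivalently x ≤ y implies x →_D y = {1}, where x →_D y := y ∨ Max L(x',y'). -/
open Set

variable {P : Type*} [PartialOrder P] [BoundedOrder P]

/-- orthocomplemented iff x ≤ y implies x →_S y = {1}, iff x ≤ y implies x →_D y = {1}. -/
theorem stmt17 (c : P → P) (hinv : HasAntitoneInvol c) (horth : IsOrthogonalPoset c)
    (hlub : IsLubComplete (P := P)) :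
    (IsOrthocomplemented c ↔ ∀ x y : P, x ≤ y → impS c x y = {(⊤ : P)}) ∧
    (IsOrthocomplemented c ↔ ∀ x y : P, x ≤ y → impD c x y = {(⊤ : P)}) := by
  have key : ∀ x y : P, x ≤ y → MaxE (lowerBounds ({x, y} : Set P)) = {x} := by
    intro x y h
    have hx : x ∈ lowerBounds ({x, y} : Set P) := by
      rintro a (rfl | ha) <;> simp_all
    ext w
    constructor
    · rintro ⟨hw, hmax⟩
      have hwx : w ≤ x := hw (by simp)
      exact (hmax x hx hwx) ▸ rfl
    · rintro rfl
      exact ⟨hx, fun z hz hxz => le_antisymm (hz (by simp)) hxz⟩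
  constructor
  · constructor
    · intro ho x y hxy
      ext z
      simp only [impS, key x y hxy, Set.mem_setOf_eq, Set.mem_singleton_iff]
      constructor
      · rintro ⟨w, rfl, hz⟩
        exact hz.unique (Set.pair_comm (c w) w ▸ ho w)
      · rintro rfl
        exact ⟨x, rfl, Set.pair_comm (c x) x ▸ ho x⟩
    · intro h x
      have := h x x le_rfl
      have hmem : (⊤ : P) ∈ impS c x x := this ▸ rfl
      obtain ⟨w, hw, hl⟩ := hmem
      rw [key x x le_rfl] at hw
      rw [Set.mem_singleton_iff] at hw
      rw [hw] at hl
      exact Set.pair_comm x (c x) ▸ hl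
  · constructor
    · intro ho x y hxy
      have hcyx : c y ≤ c x := hinv.1 x y hxy
      ext z
      simp only [impD, key (c y) (c x) hcyx, Set.pair_comm (c x) (c y),
        Set.mem_setOf_eq, Set.mem_singleton_iff]
      constructor
      · rintro ⟨w, rfl, hz⟩
        exact hz.unique (ho y)
      · rintro rfl
        exact ⟨c y, rfl, ho y⟩
    · intro h x
      have := h x x le_rfl
      have hmem : (⊤ : P) ∈ impD c x x := this ▸ rfl
      obtain ⟨w, hw, hl⟩ := hmem
      rw [show ({c x, c x} : Set P) = {c x, c x} from rfl] at hw
      have : ({c x, c x} : Set P) = {c x, c x} := rfl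
      rw [key (c x) (c x) le_rfl] at hw
      rw [Set.mem_singleton_iff] at hw
      rw [hw] at hl
      exact hl
end
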